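/- Let m ≥ 2 and p ≥ 1, let μ be a probability measure on m×p real matrices, let q₁,…,q_m be measurable functions from matrices to [0,1] with Σ_j q_j(X) = 1 for μ-a.e. X, and let β⁰ ∈ ℝᵖ with ‖β⁰‖ = 1. Assume the rank ordering property relative to β⁰ holds, and that for μ-a.e. X the values ⟨x₁,β⁰⟩,…,⟨x_m,β⁰⟩ are pairwise distinct. Then S(β⁰) ≥ S(β) for every β ∈ ℝᵖ; in particular, β⁰ maximizes the multinomial population score over the unit sphere of ℝᵖ. -/

import Mathlib

open MeasureTheory
open scoped Classical

/-- The multinomial population score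
`S(β) = (1/(m(m−1)))·Σ_j ∫ q_j(X)·#{k ≠ j : ⟨x_j,β⟩ > ⟨x_k,β⟩} dμ(X)`,
where the "matrix" `X` is encoded by its rows `X : Fin m → ℝᵖ`. -/
noncomputable def multiScore {m p : ℕ}
    (μ : Measure (Fin m → EuclideanSpace ℝ (Fin p)))
    (q : Fin m → (Fin m → EuclideanSpace ℝ (Fin p)) → ℝ)
    (β : EuclideanSpace ℝ (Fin p)) : ℝ :=
  (1 / ((m : ℝ) * ((m : ℝ) - 1))) *
    ∑ j : Fin m, ∫ X, q j X *
      ((Finset.univ.filter fun k : Fin m =>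
        k ≠ j ∧ (inner ℝ (X k) β : ℝ) < (inner ℝ (X j) β : ℝ)).card : ℝ) ∂μ

private lemma sum_pair_le_aux {m : ℕ} (f g : Fin m → Fin m → ℝ)
    (h : ∀ j k, f j k + f k j ≤ g j k + g k j) :
    ∑ j, ∑ k, f j k ≤ ∑ j, ∑ k, g j k := by
  have h2 : ∑ j, ∑ k, (f j k + f k j) ≤ ∑ j, ∑ k, (g j k + g k j) :=
    Finset.sum_le_sum fun j _ => Finset.sum_le_sum fun k _ => h j k
  have hcf : ∑ j : Fin m, ∑ k : Fin m, f k j = ∑ j : Fin m, ∑ k : Fin m, f j k :=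
    Finset.sum_comm
  have hcg : ∑ j : Fin m, ∑ k : Fin m, g k j = ∑ j : Fin m, ∑ k : Fin m, g j k :=
    Finset.sum_comm
  simp only [Finset.sum_add_distrib] at h2
  linarith

theorem multinomial_score_maximized_at_true_parameter {m p : ℕ}
    (hm : 2 ≤ m) (hp : 1 ≤ p)
    (μ : Measure (Fin m → EuclideanSpace ℝ (Fin p))) [IsProbabilityMeasure μ]
    (q : Fin m → (Fin m → EuclideanSpace ℝ (Fin p)) → ℝ)
    (hqmeas : ∀ j, Measurable (q j))
    (hq01 : ∀ j X, q j X ∈ Set.Icc (0 : ℝ) 1)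
    (hqsum : ∀ᵐ X ∂μ, ∑ j : Fin m, q j X = 1)
    (β0 : EuclideanSpace ℝ (Fin p)) (hβ0 : ‖β0‖ = 1)
    -- rank ordering property relative to β0
    (hrank : ∀ᵐ X ∂μ, ∀ j k : Fin m,
      q k X ≤ q j X ↔ (inner ℝ (X k) β0 : ℝ) ≤ (inner ℝ (X j) β0 : ℝ))
    -- the values ⟨x_j, β0⟩ are a.e. pairwise distinct
    (hdistinct : ∀ᵐ X ∂μ, ∀ j k : Fin m, j ≠ k →
      (inner ℝ (X j) β0 : ℝ) ≠ (inner ℝ (X k) β0 : ℝ)) :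
    ∀ β : EuclideanSpace ℝ (Fin p), multiScore μ q β ≤ multiScore μ q β0 := by
  intro β
  -- abbreviation for the counting function
  set cardFn : EuclideanSpace ℝ (Fin p) → Fin m → (Fin m → EuclideanSpace ℝ (Fin p)) → ℝ :=
    fun γ j X => ((Finset.univ.filter fun k : Fin m =>
      k ≠ j ∧ (inner ℝ (X k) γ : ℝ) < (inner ℝ (X j) γ : ℝ)).card : ℝ) with hcardFn
  have hrep : ∀ γ j X, q j X * cardFn γ j X =
      ∑ k : Fin m, (if k ≠ j ∧ (inner ℝ (X k) γ : ℝ) < (inner ℝ (X j) γ : ℝ)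
        then q j X else 0) := by
    intro γ j X
    rw [hcardFn]
    simp only [Finset.card_filter]
    push_cast
    rw [Finset.mul_sum]
    congr 1
    ext k
    by_cases h : k ≠ j ∧ (inner ℝ (X k) γ : ℝ) < (inner ℝ (X j) γ : ℝ) <;> simp [h]
  -- measurability of the integrands
  have hinner : ∀ (γ : EuclideanSpace ℝ (Fin p)) (j : Fin m),
      Measurable fun X : Fin m → EuclideanSpace ℝ (Fin p) => (inner ℝ (X j) γ : ℝ) :=
    fun γ j => (measurable_pi_apply j).inner measurable_const
  have hmeas : ∀ (γ : EuclideanSpace ℝ (Fin p)) (j : Fin m),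
      Measurable fun X => q j X * cardFn γ j X := by
    intro γ j
    have : (fun X => q j X * cardFn γ j X) = fun X =>
        ∑ k : Fin m, (if k ≠ j ∧ (inner ℝ (X k) γ : ℝ) < (inner ℝ (X j) γ : ℝ)
          then q j X else 0) := funext fun X => hrep γ j X
    rw [this]
    apply Finset.measurable_sum
    intro k _
    by_cases hk : k = j
    · simp [hk]
    · have hset : MeasurableSet {X : Fin m → EuclideanSpace ℝ (Fin p) |
          (inner ℝ (X k) γ : ℝ) < (inner ℝ (X j) γ : ℝ)} :=
        measurableSet_lt (hinner γ k) (hinner γ j)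
      have : (fun X => if k ≠ j ∧ (inner ℝ (X k) γ : ℝ) < (inner ℝ (X j) γ : ℝ)
          then q j X else 0) = fun X =>
          if (inner ℝ (X k) γ : ℝ) < (inner ℝ (X j) γ : ℝ) then q j X else 0 := by
        funext X
        simp [hk]
      rw [this]
      exact Measurable.ite hset (hqmeas j) measurable_const
  -- integrability of the integrands
  have hint : ∀ (γ : EuclideanSpace ℝ (Fin p)) (j : Fin m),
      Integrable (fun X => q j X * cardFn γ j X) μ := by
    intro γ j
    refine Integrable.mono' (integrable_const (m : ℝ)) (hmeas γ j).aestronglyMeasurable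
      (ae_of_all _ fun X => ?_)
    have h1 : 0 ≤ q j X := (hq01 j X).1
    have h2 : q j X ≤ 1 := (hq01 j X).2
    have h3 : (0 : ℝ) ≤ cardFn γ j X := by positivity
    have h4 : cardFn γ j X ≤ (m : ℝ) := by
      have hc : ((Finset.univ.filter fun k : Fin m =>
          k ≠ j ∧ (inner ℝ (X k) γ : ℝ) < (inner ℝ (X j) γ : ℝ)).card) ≤ m :=
        le_trans (Finset.card_filter_le _ _) (by simp)
      simp only [hcardFn]
      exact_mod_cast hc
    rw [Real.norm_eq_abs, abs_of_nonneg (mul_nonneg h1 h3)]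
    calc q j X * cardFn γ j X ≤ 1 * (m : ℝ) := by
          exact mul_le_mul h2 h4 h3 zero_le_one
      _ = (m : ℝ) := one_mul _
  -- pointwise a.e. comparison
  have key : ∀ᵐ X ∂μ, (∑ j : Fin m, q j X * cardFn β j X) ≤
      ∑ j : Fin m, q j X * cardFn β0 j X := by
    filter_upwards [hrank, hdistinct] with X hr hd
    simp only [hrep]
    apply sum_pair_le_aux
    intro j k
    by_cases hjk : j = k
    · subst hjk; simp
    · have hkj : k ≠ j := Ne.symm hjk
      have hq0 : ∀ i, (0 : ℝ) ≤ q i X := fun i => (hq01 i X).1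
      have hne := hd j k hjk
      rcases hne.lt_or_gt with h0 | h0
      · -- inner ℝ (X j) β0 < inner ℝ (X k) β0 : the β0 pair contributes q k X
        have hc3 : ¬ (k ≠ j ∧ (inner ℝ (X k) β0 : ℝ) < (inner ℝ (X j) β0 : ℝ)) := by
          rintro ⟨-, h⟩; linarith
        have hc4 : (j ≠ k ∧ (inner ℝ (X j) β0 : ℝ) < (inner ℝ (X k) β0 : ℝ)) := ⟨hjk, h0⟩
        rw [if_neg hc3, if_pos hc4]
        have hqle : q j X ≤ q k X := (hr k j).mpr h0.le
        rcases lt_trichotomy ((inner ℝ (X k) β : ℝ)) ((inner ℝ (X j) β : ℝ)) with hb | hb | hb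
        · rw [if_pos ⟨hkj, hb⟩, if_neg (by rintro ⟨-, h⟩; linarith)]
          all_goals linarith
        · rw [if_neg (by rintro ⟨-, h⟩; linarith), if_neg (by rintro ⟨-, h⟩; linarith)]
          all_goals linarith [hq0 k]
        · rw [if_neg (by rintro ⟨-, h⟩; linarith), if_pos ⟨hjk, hb⟩]
          all_goals linarith [hq0 k]
      · -- inner ℝ (X k) β0 < inner ℝ (X j) β0 : the β0 pair contributes q j X
        have hc3 : (k ≠ j ∧ (inner ℝ (X k) β0 : ℝ) < (inner ℝ (X j) β0 : ℝ)) := ⟨hkj, h0⟩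
        have hc4 : ¬ (j ≠ k ∧ (inner ℝ (X j) β0 : ℝ) < (inner ℝ (X k) β0 : ℝ)) := by
          rintro ⟨-, h⟩; linarith
        rw [if_pos hc3, if_neg hc4]
        have hqle : q k X ≤ q j X := (hr j k).mpr h0.le
        rcases lt_trichotomy ((inner ℝ (X k) β : ℝ)) ((inner ℝ (X j) β : ℝ)) with hb | hb | hb
        · rw [if_pos ⟨hkj, hb⟩, if_neg (by rintro ⟨-, h⟩; linarith)]
          all_goals linarith [hq0 j]
        · rw [if_neg (by rintro ⟨-, h⟩; linarith), if_neg (by rintro ⟨-, h⟩; linarith)]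
          all_goals linarith [hq0 j]
        · rw [if_neg (by rintro ⟨-, h⟩; linarith), if_pos ⟨hjk, hb⟩]
          all_goals linarith [hq0 j]
  -- assemble
  unfold multiScore
  have hconst : (0 : ℝ) ≤ 1 / ((m : ℝ) * ((m : ℝ) - 1)) := by
    have h2m : (2 : ℝ) ≤ (m : ℝ) := by exact_mod_cast hm
    have hpos : (0 : ℝ) < (m : ℝ) * ((m : ℝ) - 1) := by nlinarith
    exact le_of_lt (one_div_pos.mpr hpos)
  apply mul_le_mul_of_nonneg_left _ hconst
  have hsum : ∀ γ, (∑ j : Fin m, ∫ X, q j X * cardFn γ j X ∂μ) =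
      ∫ X, ∑ j : Fin m, q j X * cardFn γ j X ∂μ := by
    intro γ
    rw [integral_finset_sum]
    exact fun j _ => hint γ j
  show (∑ j : Fin m, ∫ X, q j X * cardFn β j X ∂μ) ≤
      ∑ j : Fin m, ∫ X, q j X * cardFn β0 j X ∂μ
  rw [hsum β, hsum β0]
  exact integral_mono_ae (integrable_finset_sum _ fun j _ => hint β j)
    (integrable_finset_sum _ fun j _ => hint β0 j) key
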